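/- Let E be a real Hilbert space and P⁺, P⁻, P⁰ orthogonal projections on E with mutually orthogonal ranges, P⁺ + P⁻ + P⁰ = id, and the range of P⁰ finite-dimensional; set L := P⁺ − P⁻. Let K : E → E be continuous and compact (mapping bounded sets to relatively compact sets), let A : E → E be a compact bounded linear operator, and let λ₀ ∈ ℝ. If L x + K(x) + λ₀·A x ≠ 0 for every x ∈ E with ‖x‖ = 1, then there exists ε > 0 such that ‖L x + K(x) + λ·A x‖ > ε for every λ ∈ (λ₀ − ε, λ₀ + ε) and every x ∈ E with ‖x‖ = 1. -/

import Mathlib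

noncomputable section

open Real RealInnerProductSpace Bornology Filter Topology

private lemma finrank_compact_image_aux {E : Type*} [NormedAddCommGroup E]
    [InnerProductSpace ℝ E]
    (P : E →L[ℝ] E) (hfin : FiniteDimensional ℝ (LinearMap.range (P : E →ₗ[ℝ] E)))
    {s : Set E} (hs : IsBounded s) : IsCompact (closure (P '' s)) := by
  haveI := hfin
  set V : Submodule ℝ E := LinearMap.range (P : E →ₗ[ℝ] E) with hV
  have hVclosed : IsClosed (V : Set E) := Submodule.closed_of_finiteDimensional V
  have himg : P '' s ⊆ (V : Set E) := by
    rintro _ ⟨x, -, rfl⟩; exact LinearMap.mem_range_self _ x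
  have hcl : closure (P '' s) ⊆ (V : Set E) := closure_minimal himg hVclosed
  have hbdd : IsBounded (closure (P '' s)) := (P.lipschitz.isBounded_image hs).closure
  have hT : IsCompact ((Subtype.val : V → E) ⁻¹' closure (P '' s)) := by
    apply Metric.isCompact_of_isClosed_isBounded
    · exact isClosed_closure.preimage continuous_subtype_val
    · obtain ⟨C, hC⟩ := Metric.isBounded_iff.mp hbdd
      refine Metric.isBounded_iff.mpr ⟨C, fun a ha b hb => ?_⟩
      rw [Subtype.dist_eq]; exact hC ha hb
  have heq : Subtype.val '' ((Subtype.val : V → E) ⁻¹' closure (P '' s))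
      = closure (P '' s) :=
    Set.image_preimage_eq_of_subset (by rwa [Subtype.range_coe])
  rw [← heq]
  exact hT.image continuous_subtype_val

/-- Abstract Hilbert space form of Lemma 5 of the paper: if the `𝓛𝓢`-vector field
`L + K + λ₀·A` (with `L = P⁺ − P⁻` coming from an orthogonal splitting with
finite-dimensional null part) does not vanish on the unit sphere, then it is bounded away
from zero on the unit sphere, uniformly for `λ` close to `λ₀`. -/
theorem LS_field_bounded_away_on_sphere
    (E : Type*) [NormedAddCommGroup E] [InnerProductSpace ℝ E] [CompleteSpace E]
    (Pp Pm P0 : E →L[ℝ] E)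
    -- orthogonal projections
    (hPp_proj : Pp.comp Pp = Pp) (hPp_sa : IsSelfAdjoint Pp)
    (hPm_proj : Pm.comp Pm = Pm) (hPm_sa : IsSelfAdjoint Pm)
    (hP0_proj : P0.comp P0 = P0) (hP0_sa : IsSelfAdjoint P0)
    -- with mutually orthogonal ranges
    (horth1 : ∀ x y : E, ⟪Pp x, Pm y⟫ = (0 : ℝ))
    (horth2 : ∀ x y : E, ⟪Pp x, P0 y⟫ = (0 : ℝ))
    (horth3 : ∀ x y : E, ⟪Pm x, P0 y⟫ = (0 : ℝ))
    -- summing to the identity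
    (hsum : Pp + Pm + P0 = ContinuousLinearMap.id ℝ E)
    -- range of `P⁰` finite-dimensional
    (hfin : FiniteDimensional ℝ (LinearMap.range (P0 : E →ₗ[ℝ] E)))
    -- `K` continuous and compact (maps bounded sets to relatively compact sets)
    (K : E → E) (hKcont : Continuous K)
    (hKcpt : ∀ s : Set E, Bornology.IsBounded s → IsCompact (closure (K '' s)))
    -- `A` a compact bounded linear operator
    (A : E →L[ℝ] E) (hA : IsCompactOperator A)
    (lam0 : ℝ)
    (h0 : ∀ x : E, ‖x‖ = 1 → (Pp - Pm) x + K x + lam0 • A x ≠ 0) :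
    ∃ ε > (0 : ℝ), ∀ lam ∈ Set.Ioo (lam0 - ε) (lam0 + ε), ∀ x : E, ‖x‖ = 1 →
      ε < ‖(Pp - Pm) x + K x + lam • A x‖ := by
  by_contra hcon
  push_neg at hcon
  -- extract sequences
  have hseq : ∀ n : ℕ, ∃ lam ∈ Set.Ioo (lam0 - 1/(n+1)) (lam0 + 1/(n+1)), ∃ x : E,
      ‖x‖ = 1 ∧ ‖(Pp - Pm) x + K x + lam • A x‖ ≤ 1/(n+1) := by
    intro n
    have hpos : (0:ℝ) < 1/(n+1) := by positivity
    exact hcon (1/(n+1)) hpos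
  choose lam hlam x hx hF using hseq
  set F : ℕ → E := fun n => (Pp - Pm) (x n) + K (x n) + lam n • A (x n) with hFdef
  -- basic limits
  have hinv : Tendsto (fun n : ℕ => (1:ℝ)/(n+1)) atTop (𝓝 0) :=
    tendsto_one_div_add_atTop_nhds_zero_nat
  have hlam_tendsto : Tendsto lam atTop (𝓝 lam0) := by
    have hlo : Tendsto (fun n : ℕ => lam0 - 1/(n+1)) atTop (𝓝 lam0) := by
      simpa using tendsto_const_nhds.sub hinv
    have hhi : Tendsto (fun n : ℕ => lam0 + 1/(n+1)) atTop (𝓝 lam0) := by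
      simpa using tendsto_const_nhds.add hinv
    exact tendsto_of_tendsto_of_tendsto_of_le_of_le hlo hhi
      (fun n => le_of_lt (hlam n).1) (fun n => le_of_lt (hlam n).2)
  have hF0 : Tendsto F atTop (𝓝 0) := squeeze_zero_norm (fun n => hF n) hinv
  -- compactness
  have hSbdd : IsBounded (Metric.sphere (0:E) 1) := Metric.isBounded_sphere
  have hxS : ∀ n, x n ∈ Metric.sphere (0:E) 1 := fun n =>
    mem_sphere_zero_iff_norm.mpr (hx n)
  have hC1 : IsCompact (closure (K '' Metric.sphere (0:E) 1)) := hKcpt _ hSbdd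
  have hC2 : IsCompact (closure (A '' Metric.sphere (0:E) 1)) :=
    IsCompactOperator.isCompact_closure_image_of_bounded (f := (A : E →ₗ[ℝ] E)) hA hSbdd
  have hC3 : IsCompact (closure (P0 '' Metric.sphere (0:E) 1)) :=
    finrank_compact_image_aux P0 hfin hSbdd
  set u : ℕ → E × E × E := fun n => (K (x n), A (x n), P0 (x n)) with hu_def
  have hu : ∀ n, u n ∈ (closure (K '' Metric.sphere (0:E) 1)) ×ˢ
      ((closure (A '' Metric.sphere (0:E) 1)) ×ˢ (closure (P0 '' Metric.sphere (0:E) 1))) := by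
    intro n
    refine ⟨subset_closure (Set.mem_image_of_mem _ (hxS n)),
      subset_closure (Set.mem_image_of_mem _ (hxS n)),
      subset_closure (Set.mem_image_of_mem _ (hxS n))⟩
  obtain ⟨c, -, φ, hφ, hconv⟩ := (hC1.prod (hC2.prod hC3)).tendsto_subseq hu
  -- component limits
  have hKφ : Tendsto (fun n => K (x (φ n))) atTop (𝓝 c.1) := by
    have := (continuous_fst.tendsto c).comp hconv
    simpa [hu_def, Function.comp_def] using this
  have hAφ : Tendsto (fun n => A (x (φ n))) atTop (𝓝 c.2.1) := by
    have := ((continuous_fst.comp continuous_snd).tendsto c).comp hconv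
    simpa [hu_def, Function.comp_def] using this
  have hPφ : Tendsto (fun n => P0 (x (φ n))) atTop (𝓝 c.2.2) := by
    have := ((continuous_snd.comp continuous_snd).tendsto c).comp hconv
    simpa [hu_def, Function.comp_def] using this
  have hlamφ : Tendsto (fun n => lam (φ n)) atTop (𝓝 lam0) :=
    hlam_tendsto.comp hφ.tendsto_atTop
  have hFφ : Tendsto (fun n => F (φ n)) atTop (𝓝 0) := hF0.comp hφ.tendsto_atTop
  -- algebraic identities
  have hPpPm : ∀ y : E, Pp (Pm y) = 0 := by
    intro y
    have hz : ∀ z : E, ⟪z, Pp (Pm y)⟫ = (0:ℝ) := by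
      intro z
      have hsym := hPp_sa.isSymmetric z (Pm y)
      simp only [ContinuousLinearMap.coe_coe] at hsym
      rw [← hsym]
      exact horth1 z y
    have := hz (Pp (Pm y))
    rwa [real_inner_self_eq_norm_sq, pow_eq_zero_iff (by norm_num), norm_eq_zero] at this
  have hPmPp : ∀ y : E, Pm (Pp y) = 0 := by
    intro y
    have hz : ∀ z : E, ⟪z, Pm (Pp y)⟫ = (0:ℝ) := by
      intro z
      have hsym := hPm_sa.isSymmetric z (Pp y)
      simp only [ContinuousLinearMap.coe_coe] at hsym
      rw [← hsym, real_inner_comm]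
      exact horth1 y z
    have := hz (Pm (Pp y))
    rwa [real_inner_self_eq_norm_sq, pow_eq_zero_iff (by norm_num), norm_eq_zero] at this
  have hid : ∀ y : E, Pp y + Pm y + P0 y = y := by
    intro y
    have := ContinuousLinearMap.ext_iff.mp hsum y
    simpa using this
  have hLL : ∀ y : E, (Pp - Pm) ((Pp - Pm) y) = y - P0 y := by
    intro y
    have h1 : Pp (Pp y) = Pp y := ContinuousLinearMap.ext_iff.mp hPp_proj y
    have h2 : Pm (Pm y) = Pm y := ContinuousLinearMap.ext_iff.mp hPm_proj y
    simp only [ContinuousLinearMap.sub_apply, map_sub]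
    rw [h1, h2, hPpPm y, hPmPp y, sub_zero, zero_sub, sub_neg_eq_add, eq_sub_iff_add_eq]
    exact hid y
  -- representation of x (φ n)
  have hrep : ∀ n, x (φ n) = (Pp - Pm) (F (φ n)) - (Pp - Pm) (K (x (φ n)))
      - lam (φ n) • (Pp - Pm) (A (x (φ n))) + P0 (x (φ n)) := by
    intro n
    have h2 : (Pp - Pm) (x (φ n)) = F (φ n) - K (x (φ n)) - lam (φ n) • A (x (φ n)) := by
      simp only [hFdef]; abel
    calc x (φ n)
        = (Pp - Pm) ((Pp - Pm) (x (φ n))) + P0 (x (φ n)) := by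
          rw [hLL]; abel
      _ = (Pp - Pm) (F (φ n) - K (x (φ n)) - lam (φ n) • A (x (φ n))) + P0 (x (φ n)) := by
          rw [h2]
      _ = (Pp - Pm) (F (φ n)) - (Pp - Pm) (K (x (φ n)))
            - lam (φ n) • (Pp - Pm) (A (x (φ n))) + P0 (x (φ n)) := by
          rw [map_sub, map_sub, map_smul]
  -- convergence of x (φ n)
  set xinf : E := 0 - (Pp - Pm) c.1 - lam0 • (Pp - Pm) c.2.1 + c.2.2 with hxinf
  have hXconv : Tendsto (fun n => x (φ n)) atTop (𝓝 xinf) := by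
    have hL0 : Tendsto (fun n => (Pp - Pm) (F (φ n))) atTop (𝓝 (0:E)) := by
      have := ((Pp - Pm).continuous.tendsto 0).comp hFφ
      simpa [Function.comp_def] using this
    have hLK : Tendsto (fun n => (Pp - Pm) (K (x (φ n)))) atTop (𝓝 ((Pp - Pm) c.1)) :=
      ((Pp - Pm).continuous.tendsto c.1).comp hKφ
    have hLA : Tendsto (fun n => (Pp - Pm) (A (x (φ n)))) atTop (𝓝 ((Pp - Pm) c.2.1)) :=
      ((Pp - Pm).continuous.tendsto c.2.1).comp hAφ
    have := ((hL0.sub hLK).sub (hlamφ.smul hLA)).add hPφ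
    rw [hxinf]
    exact this.congr (fun n => (hrep n).symm)
  have hnorm : ‖xinf‖ = 1 := by
    have h1 : Tendsto (fun n => ‖x (φ n)‖) atTop (𝓝 ‖xinf‖) := hXconv.norm
    have h2 : Tendsto (fun n => ‖x (φ n)‖) atTop (𝓝 1) := by
      simpa [hx] using (tendsto_const_nhds : Tendsto (fun _ : ℕ => (1:ℝ)) atTop (𝓝 1))
    exact tendsto_nhds_unique h1 h2
  have hzero : (Pp - Pm) xinf + K xinf + lam0 • A xinf = 0 := by
    have hG : Tendsto (fun n => (Pp - Pm) (x (φ n)) + K (x (φ n)) + lam (φ n) • A (x (φ n)))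
        atTop (𝓝 ((Pp - Pm) xinf + K xinf + lam0 • A xinf)) := by
      have t1 : Tendsto (fun n => (Pp - Pm) (x (φ n))) atTop (𝓝 ((Pp - Pm) xinf)) :=
        ((Pp - Pm).continuous.tendsto xinf).comp hXconv
      have t2 : Tendsto (fun n => K (x (φ n))) atTop (𝓝 (K xinf)) :=
        (hKcont.tendsto xinf).comp hXconv
      have t3 : Tendsto (fun n => A (x (φ n))) atTop (𝓝 (A xinf)) :=
        (A.continuous.tendsto xinf).comp hXconv
      exact (t1.add t2).add (hlamφ.smul t3)
    exact tendsto_nhds_unique hG hFφ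
  exact h0 xinf hnorm hzero
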